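/- Let f : ℂ → ℂ be an entire function (differentiable everywhere in the complex sense) that is not identically zero, and suppose there exists a real number λ such that |f(r·z)| = r^λ · |f(z)| for every real r > 0 and every z ∈ ℂ. Then λ is a nonnegative integer p and there exists a nonzero constant c ∈ ℂ with f(z) = c·z^p for all z ∈ ℂ. -/

import Mathlib

open Filter Topology Set

/-- Classification of entire functions with homogeneous modulus (used in (II.5.10)):
if `f` is entire, not identically zero, and `|f(r z)| = r^λ |f(z)|` for all real `r > 0`
and all `z`, then `λ` is a nonnegative integer `p` and `f(z) = c z^p` for some `c ≠ 0`. -/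
theorem entire_homogeneous_is_monomial (f : ℂ → ℂ) (hf : Differentiable ℂ f)
    (hne : ∃ z, f z ≠ 0) (lam : ℝ)
    (hhom : ∀ r : ℝ, 0 < r → ∀ z : ℂ,
      ‖f ((r : ℂ) * z)‖ = r ^ lam * ‖f (z)‖) :
    ∃ p : ℕ, lam = (p : ℝ) ∧ ∃ c : ℂ, c ≠ 0 ∧ ∀ z, f z = c * z ^ p := by
  have h0 : AnalyticAt ℂ f 0 := hf.analyticAt 0
  -- finite order at 0
  have htop : analyticOrderAt f 0 ≠ ⊤ := by
    intro h
    rw [analyticOrderAt_eq_top] at h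
    obtain ⟨z, hz⟩ := hne
    have hA : AnalyticOnNhd ℂ f Set.univ := fun x _ => hf.analyticAt x
    exact hz (hA.eqOn_zero_of_preconnected_of_eventuallyEq_zero isPreconnected_univ
      (Set.mem_univ 0) h (Set.mem_univ z))
  set p : ℕ := (analyticOrderAt f 0).toNat with hp
  have horder : analyticOrderAt f 0 = (p : ℕ∞) := (ENat.coe_toNat htop).symm
  obtain ⟨g₀, hg_an, hg_ne, hg_eq⟩ := h0.analyticOrderAt_eq_natCast.mp horder
  have hg_eq' : ∀ᶠ z in 𝓝 (0:ℂ), f z = z ^ p * g₀ z := by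
    filter_upwards [hg_eq] with z h1
    simpa [smul_eq_mul] using h1
  have hev : ∀ᶠ z in 𝓝 (0:ℂ), f z = z ^ p * g₀ z ∧ g₀ z ≠ 0 := by
    filter_upwards [hg_eq', hg_an.continuousAt.eventually_ne hg_ne] with z h1 h2
    exact ⟨h1, h2⟩
  obtain ⟨ε, hε, hball⟩ := Metric.eventually_nhds_iff_ball.mp hev
  set z₁ : ℂ := ((ε/2 : ℝ) : ℂ) with hz₁def
  have hεpos : (0:ℝ) < ε/2 := by linarith
  have habsz₁ : ‖z₁‖ = ε/2 := by
    rw [hz₁def, Complex.norm_real, Real.norm_eq_abs, abs_of_pos hεpos]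
  have hz₁mem : z₁ ∈ Metric.ball (0:ℂ) ε := by
    simp [Metric.mem_ball, Complex.dist_eq, habsz₁]
    linarith
  obtain ⟨hfz₁, hg₀z₁⟩ := hball z₁ hz₁mem
  set a : ℝ := lam - p with ha
  -- eventual identity on 𝓝[>] 0
  have hev2 : ∀ᶠ r : ℝ in 𝓝[>] (0:ℝ),
      ‖g₀ ((r:ℂ) * z₁)‖ = r ^ a * ‖g₀ z₁‖ := by
    filter_upwards [Ioo_mem_nhdsGT_of_mem (by constructor <;> norm_num : (0:ℝ) ∈ Ico 0 1)]
      with r hr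
    obtain ⟨hr0, hr1⟩ := hr
    have hmem : (r:ℂ) * z₁ ∈ Metric.ball (0:ℂ) ε := by
      simp only [Metric.mem_ball, Complex.dist_eq, sub_zero, norm_mul, Complex.norm_real, Real.norm_eq_abs,
        abs_of_pos hr0, habsz₁]
      nlinarith
    obtain ⟨hfz, _⟩ := hball _ hmem
    have hh := hhom r hr0 z₁
    rw [hfz, hfz₁] at hh
    have e1 : ‖((r:ℂ)*z₁)^p * g₀ ((r:ℂ)*z₁)‖
        = (r*(ε/2))^p * ‖g₀ ((r:ℂ)*z₁)‖ := by
      rw [norm_mul, norm_pow, norm_mul, Complex.norm_real, Real.norm_eq_abs, abs_of_pos hr0, habsz₁]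
    have e2 : ‖z₁^p * g₀ z₁‖ = (ε/2)^p * ‖g₀ z₁‖ := by
      rw [norm_mul, norm_pow, habsz₁]
    rw [e1, e2, mul_pow] at hh
    have key : r ^ p * ‖g₀ ((r:ℂ) * z₁)‖ = r ^ lam * ‖g₀ z₁‖ := by
      apply mul_left_cancel₀ (pow_pos hεpos p).ne'
      linear_combination hh
    have hrp : (r:ℝ) ^ p = r ^ ((p:ℕ):ℝ) := (Real.rpow_natCast r p).symm
    have hrpow : r ^ a = r ^ lam / r ^ ((p:ℕ):ℝ) := by
      rw [ha, Real.rpow_sub hr0]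
    have hrppos : (0:ℝ) < r ^ p := pow_pos hr0 p
    rw [hrpow, ← hrp]
    field_simp
    linear_combination key
  -- tendsto of |g₀ (r z₁)| to |g₀ 0|
  have hT1 : Tendsto (fun r : ℝ => ‖g₀ ((r:ℂ) * z₁)‖) (𝓝[>] (0:ℝ))
      (𝓝 (‖g₀ 0‖)) := by
    have h1 : Tendsto (fun r : ℝ => (r:ℂ) * z₁) (𝓝[>] (0:ℝ)) (𝓝 0) := by
      have : Tendsto (fun r : ℝ => (r:ℂ) * z₁) (𝓝 (0:ℝ)) (𝓝 ((0:ℂ) * z₁)) :=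
        (Complex.continuous_ofReal.mul continuous_const).continuousAt
      simpa using this.mono_left nhdsWithin_le_nhds
    exact (continuous_norm.continuousAt.comp (hg_an.continuousAt)).tendsto.comp h1
  have hg₀z₁abs : ‖g₀ z₁‖ ≠ 0 := by simpa using hg₀z₁
  have hT2 : Tendsto (fun r : ℝ => r ^ a * ‖g₀ z₁‖) (𝓝[>] (0:ℝ))
      (𝓝 (‖g₀ 0‖)) := hT1.congr' hev2
  have hT3 : Tendsto (fun r : ℝ => r ^ a) (𝓝[>] (0:ℝ))
      (𝓝 (‖g₀ 0‖ / ‖g₀ z₁‖)) := by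
    have := hT2.div_const (‖g₀ z₁‖)
    simpa [mul_div_assoc, div_self hg₀z₁abs, div_eq_mul_inv] using
      (hT2.mul_const (‖g₀ z₁‖)⁻¹).congr (fun r => by
        field_simp)
  have hLne : ‖g₀ 0‖ / ‖g₀ z₁‖ ≠ 0 :=
    div_ne_zero (by simpa using hg_ne) hg₀z₁abs
  have hane : a = 0 := by
    rcases lt_trichotomy a 0 with h | h | h
    · -- a < 0 : r^(-a) → 0, product 1 → 0, contradiction
      have hpos : (0:ℝ) < -a := by linarith
      have hT4 : Tendsto (fun r : ℝ => r ^ (-a)) (𝓝[>] (0:ℝ)) (𝓝 0) := by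
        have := (Real.continuousAt_rpow_const 0 (-a) (Or.inr hpos.le)).tendsto
        simpa [Real.zero_rpow hpos.ne'] using this.mono_left nhdsWithin_le_nhds
      have hT5 : Tendsto (fun r : ℝ => r ^ a * r ^ (-a)) (𝓝[>] (0:ℝ)) (𝓝 0) := by
        simpa using hT3.mul hT4
      have hone : Tendsto (fun _ : ℝ => (1:ℝ)) (𝓝[>] (0:ℝ)) (𝓝 0) := by
        refine hT5.congr' ?_
        filter_upwards [self_mem_nhdsWithin] with r hr
        rw [← Real.rpow_add hr, add_neg_cancel, Real.rpow_zero]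
      have h01 : (1:ℝ) = 0 := tendsto_nhds_unique (tendsto_const_nhds) hone
      norm_num at h01
    · exact h
    · -- a > 0 : r^a → 0, contradiction with limit nonzero
      have hT4 : Tendsto (fun r : ℝ => r ^ a) (𝓝[>] (0:ℝ)) (𝓝 0) := by
        have := (Real.continuousAt_rpow_const 0 a (Or.inr h.le)).tendsto
        simpa [Real.zero_rpow h.ne'] using this.mono_left nhdsWithin_le_nhds
      exact absurd (tendsto_nhds_unique hT3 hT4) hLne
  have hlam : lam = (p : ℝ) := by rw [ha] at hane; linarith
  refine ⟨p, hlam, ?_⟩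
  -- the global quotient function
  set g : ℂ → ℂ := fun z => if z = 0 then g₀ 0 else f z / z ^ p with hgdef
  have hgg₀ : g =ᶠ[𝓝 (0:ℂ)] g₀ := by
    filter_upwards [hg_eq'] with z h1
    by_cases hz : z = 0
    · simp [hgdef, hz]
    · simp only [hgdef, hz, if_false, h1]
      exact mul_div_cancel_left₀ _ (pow_ne_zero p hz)
  have hgdiff : Differentiable ℂ g := by
    intro z
    by_cases hz : z = 0
    · subst hz
      exact (hg_an.differentiableAt).congr_of_eventuallyEq hgg₀
    · have hdiff : DifferentiableAt ℂ (fun w : ℂ => f w / w ^ p) z :=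
        (hf z).div (differentiableAt_pow p) (pow_ne_zero p hz)
      refine hdiff.congr_of_eventuallyEq ?_
      have hmem : z ∈ ({0}ᶜ : Set ℂ) := by simp [hz]
      filter_upwards [isOpen_compl_singleton.mem_nhds hmem] with w hw
      have hw' : w ≠ 0 := hw
      simp [hgdef, hw']
  -- |g| is constant
  have habsg : ∀ z, ‖g z‖ = ‖g 0‖ := by
    intro z
    by_cases hz : z = 0
    · rw [hz]
    · have hzabs : (0:ℝ) < ‖z‖ := by simpa using hz
      have hconst : ∀ᶠ r : ℝ in 𝓝[>] (0:ℝ),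
          ‖g ((r:ℂ) * z)‖ = ‖g z‖ := by
        filter_upwards [self_mem_nhdsWithin] with r hr
        have hr0 : (0:ℝ) < r := hr
        have hrz : (r:ℂ) * z ≠ 0 := by
          simp [hz, Complex.ofReal_eq_zero, hr0.ne']
        have h1 : g ((r:ℂ) * z) = f ((r:ℂ) * z) / ((r:ℂ) * z) ^ p := by
          simp [hgdef, hrz]
        have h2 : g z = f z / z ^ p := by simp [hgdef, hz]
        rw [h1, h2, norm_div, norm_div, hhom r hr0 z, hlam, Real.rpow_natCast]
        simp only [norm_pow, norm_mul, Complex.norm_real, Real.norm_eq_abs, abs_of_pos hr0]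
        rw [mul_pow]
        have : (0:ℝ) < r ^ p := pow_pos hr0 p
        field_simp
      have hTz : Tendsto (fun r : ℝ => ‖g ((r:ℂ) * z)‖) (𝓝[>] (0:ℝ))
          (𝓝 (‖g 0‖)) := by
        have h1 : Tendsto (fun r : ℝ => (r:ℂ) * z) (𝓝[>] (0:ℝ)) (𝓝 0) := by
          have : Tendsto (fun r : ℝ => (r:ℂ) * z) (𝓝 (0:ℝ)) (𝓝 ((0:ℂ) * z)) :=
            (Complex.continuous_ofReal.mul continuous_const).continuousAt
          simpa using this.mono_left nhdsWithin_le_nhds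
        exact ((continuous_norm.comp hgdiff.continuous).continuousAt).tendsto.comp h1
      have hTz' : Tendsto (fun _ : ℝ => ‖g z‖) (𝓝[>] (0:ℝ))
          (𝓝 (‖g 0‖)) := hTz.congr' hconst
      exact (tendsto_nhds_unique hTz' tendsto_const_nhds).symm
  -- Liouville
  have hbdd : Bornology.IsBounded (Set.range g) := by
    rw [isBounded_iff_forall_norm_le]
    exact ⟨‖g 0‖, by rintro x ⟨z, rfl⟩; simp [habsg z]⟩
  have hgconst : ∀ z, g z = g 0 := fun z => hgdiff.apply_eq_apply_of_bounded hbdd z 0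
  have hg0 : g 0 = g₀ 0 := by simp [hgdef]
  refine ⟨g₀ 0, hg_ne, fun z => ?_⟩
  by_cases hz : z = 0
  · subst hz
    have hf0 : f 0 = 0 ^ p * g₀ 0 := hg_eq'.self_of_nhds
    rw [hf0]; ring
  · have := hgconst z
    rw [hg0] at this
    simp only [hgdef, hz, if_false] at this
    field_simp at this
    linear_combination this
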